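/- If a triple (f,g,h) of functions ℕ → ℕ names a real number ξ, then the triple (K(f,g,h), K(g,f,h), id) also names ξ, where K(f,g,h)(n) = ehelp(f(2n+1), g(2n+1), h(2n+1), n). -/

import Mathlib

noncomputable def ehelp (p q r n : ℕ) : ℕ :=
  ⌊(n + 1 : ℝ) * ((p - q : ℕ) : ℝ) / (r + 1) + 1 / 2⌋₊

noncomputable def K (f g h : ℕ → ℕ) : ℕ → ℕ :=
  fun n => ehelp (f (2 * n + 1)) (g (2 * n + 1)) (h (2 * n + 1)) n

def Names (f g h : ℕ → ℕ) (ξ : ℝ) : Prop :=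
  ∀ n : ℕ, |((f n : ℝ) - (g n : ℝ)) / ((h n : ℝ) + 1) - ξ| < 1 / (n + 1)

theorem stmt_2 (f g h : ℕ → ℕ) (ξ : ℝ) (hname : Names f g h ξ) :
    Names (K f g h) (K g f h) id ξ := by
  have round_close : ∀ y : ℝ, 0 ≤ y → |(⌊y + 1/2⌋₊ : ℝ) - y| ≤ 1/2 := by
    intro y hy
    rw [abs_le]
    constructor
    · have := Nat.lt_floor_add_one (y + 1/2)
      linarith
    · have := Nat.floor_le (by linarith : (0:ℝ) ≤ y + 1/2)
      linarith
  intro n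
  set m := 2 * n + 1 with hm
  have hx := hname m
  have hn1 : (0:ℝ) < (n:ℝ) + 1 := by positivity
  have hh1 : (0:ℝ) < (h m : ℝ) + 1 := by positivity
  have hmcast : ((m : ℕ) : ℝ) + 1 = 2 * ((n:ℝ) + 1) := by
    rw [hm]; push_cast; ring
  rw [hmcast] at hx
  simp only [Names, id]
  set x : ℝ := ((f m : ℝ) - (g m : ℝ)) / ((h m : ℝ) + 1) with hxdef
  have halfsum : 1/(2*((n:ℝ)+1)) + 1/(2*((n:ℝ)+1)) = 1 / ((n:ℝ)+1) := by
    field_simp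
    norm_num
  rcases le_total (g m) (f m) with hfg | hfg
  · have hKg : K g f h n = 0 := by
      show ehelp (g m) (f m) (h m) n = 0
      unfold ehelp
      rw [Nat.sub_eq_zero_of_le hfg]
      norm_num
    have hKf : (K f g h n : ℝ) = ⌊((n:ℝ) + 1) * x + 1/2⌋₊ := by
      show ((ehelp (f m) (g m) (h m) n : ℕ) : ℝ) = _
      unfold ehelp
      rw [Nat.cast_sub hfg, hxdef]
      congr 1
      push_cast
      ring
    have h1 : |(K f g h n : ℝ) - ((n:ℝ)+1) * x| ≤ 1/2 := by
      rw [hKf]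
      apply round_close
      apply mul_nonneg (by positivity)
      apply div_nonneg _ (le_of_lt hh1)
      have : (g m : ℝ) ≤ (f m : ℝ) := Nat.cast_le.mpr hfg
      linarith
    have h2 : |(K f g h n : ℝ) / ((n:ℝ)+1) - x| ≤ 1/(2*((n:ℝ)+1)) := by
      rw [show (K f g h n : ℝ) / ((n:ℝ)+1) - x
          = ((K f g h n : ℝ) - ((n:ℝ)+1) * x) / ((n:ℝ)+1) by field_simp]
      rw [abs_div, abs_of_pos hn1, div_le_div_iff₀ hn1 (by positivity)]
      nlinarith [abs_nonneg ((K f g h n : ℝ) - ((n:ℝ)+1) * x)]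
    rw [hKg]
    simp only [Nat.cast_zero, sub_zero]
    calc |(K f g h n : ℝ) / ((n:ℝ)+1) - ξ|
        ≤ |(K f g h n : ℝ) / ((n:ℝ)+1) - x| + |x - ξ| :=
          abs_sub_le _ x ξ
      _ < 1/(2*((n:ℝ)+1)) + 1/(2*((n:ℝ)+1)) := add_lt_add_of_le_of_lt h2 hx
      _ = 1 / ((n:ℝ)+1) := halfsum
  · have hKf : K f g h n = 0 := by
      show ehelp (f m) (g m) (h m) n = 0
      unfold ehelp
      rw [Nat.sub_eq_zero_of_le hfg]
      norm_num
    have hKg : (K g f h n : ℝ) = ⌊((n:ℝ) + 1) * (-x) + 1/2⌋₊ := by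
      show ((ehelp (g m) (f m) (h m) n : ℕ) : ℝ) = _
      unfold ehelp
      rw [Nat.cast_sub hfg, hxdef]
      congr 1
      push_cast
      field_simp
      congr 1
      ring
    have h1 : |(K g f h n : ℝ) - ((n:ℝ)+1) * (-x)| ≤ 1/2 := by
      rw [hKg]
      apply round_close
      apply mul_nonneg (by positivity)
      rw [hxdef, neg_div']
      apply div_nonneg _ (le_of_lt hh1)
      have : (f m : ℝ) ≤ (g m : ℝ) := Nat.cast_le.mpr hfg
      linarith
    have h2 : |(K g f h n : ℝ) / ((n:ℝ)+1) - (-x)| ≤ 1/(2*((n:ℝ)+1)) := by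
      rw [show (K g f h n : ℝ) / ((n:ℝ)+1) - (-x)
          = ((K g f h n : ℝ) - ((n:ℝ)+1) * (-x)) / ((n:ℝ)+1) by field_simp]
      rw [abs_div, abs_of_pos hn1, div_le_div_iff₀ hn1 (by positivity)]
      nlinarith [abs_nonneg ((K g f h n : ℝ) - ((n:ℝ)+1) * (-x))]
    rw [hKf]
    simp only [Nat.cast_zero, zero_sub, neg_div]
    have heq : -((K g f h n : ℝ) / ((n:ℝ)+1)) - ξ
        = -((K g f h n : ℝ) / ((n:ℝ)+1) - (-x)) + (x - ξ) := by ring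
    rw [heq]
    calc |-((K g f h n : ℝ) / ((n:ℝ)+1) - (-x)) + (x - ξ)|
        ≤ |-((K g f h n : ℝ) / ((n:ℝ)+1) - (-x))| + |x - ξ| := abs_add_le _ _
      _ = |(K g f h n : ℝ) / ((n:ℝ)+1) - (-x)| + |x - ξ| := by rw [abs_neg]
      _ < 1/(2*((n:ℝ)+1)) + 1/(2*((n:ℝ)+1)) := add_lt_add_of_le_of_lt h2 hx
      _ = 1 / ((n:ℝ)+1) := halfsum
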